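/- Let d, v : [0,1] → ℝ be integrable with d(t) ≥ 0, v(t) > 0, and suppose for each t, d(t) ≤ exp(α − β x(t))·v(t) with x(t) ∈ [x̲, x̄] and β > 0. Define D = ∫₀¹ d, V = ∫₀¹ v, and x* = α/β − (1/β)·ln(D/V) (when D > 0). Then x* ∈ [x̲, x̄], D = exp(α − β x*)·V, and ∫₀¹ x(t) d(t) dt ≤ x*·D, i.e., the constant price x* extracts at least as much revenue from the aggregate demand. -/

import Mathlib

open MeasureTheory

/-- Convexity/Gibbs pointwise inequality: for positive `a, b, c`,
`log c * a + (a - c*b) ≤ a * log (a / b)`. -/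
lemma gibbs_pointwise (a b c : ℝ) (ha : 0 < a) (hb : 0 < b) (hc : 0 < c) :
    Real.log c * a + (a - c * b) ≤ a * Real.log (a / b) := by
  have hx : 0 < c * b / a := by positivity
  have h1 : Real.log (c * b / a) ≤ c * b / a - 1 := Real.log_le_sub_one_of_pos hx
  have h2 : Real.log (c * b / a) = Real.log c + Real.log b - Real.log a := by
    rw [Real.log_div (by positivity) ha.ne', Real.log_mul hc.ne' hb.ne']
  have h3 : Real.log (a / b) = Real.log a - Real.log b := Real.log_div ha.ne' hb.ne'
  have h4 : a * Real.log (c * b / a) ≤ a * (c * b / a - 1) :=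
    mul_le_mul_of_nonneg_left h1 ha.le
  have h5 : a * (c * b / a) = c * b := by field_simp
  nlinarith [h4, h2, h3, h5]

theorem constant_price_optimal (α β xlo xhi : ℝ) (hβ : 0 < β) (hbox : xlo ≤ xhi)
    (d v x : ℝ → ℝ)
    (hd : IntegrableOn d (Set.Icc 0 1)) (hv : IntegrableOn v (Set.Icc 0 1))
    (hxd : IntegrableOn (fun t => x t * d t) (Set.Icc 0 1))
    (hd0 : ∀ t ∈ Set.Icc (0 : ℝ) 1, 0 ≤ d t)
    (hv0 : ∀ t ∈ Set.Icc (0 : ℝ) 1, 0 < v t)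
    (hx : ∀ t ∈ Set.Icc (0 : ℝ) 1, x t ∈ Set.Icc xlo xhi)
    (hdeq : ∀ t ∈ Set.Icc (0 : ℝ) 1, d t = Real.exp (α - β * x t) * v t)
    (D V : ℝ)
    (hD : D = ∫ t in Set.Icc (0 : ℝ) 1, d t)
    (hV : V = ∫ t in Set.Icc (0 : ℝ) 1, v t)
    (hDpos : 0 < D) :
    (α / β - (1 / β) * Real.log (D / V)) ∈ Set.Icc xlo xhi ∧
    D = Real.exp (α - β * (α / β - (1 / β) * Real.log (D / V))) * V ∧
    (∫ t in Set.Icc (0 : ℝ) 1, x t * d t) ≤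
      (α / β - (1 / β) * Real.log (D / V)) * D := by
  have hs : MeasurableSet (Set.Icc (0 : ℝ) 1) := measurableSet_Icc
  -- upper bound: D ≤ exp(α - β xlo) * V
  have hub : D ≤ Real.exp (α - β * xlo) * V := by
    rw [hD, hV, ← integral_const_mul]
    refine setIntegral_mono_on hd (hv.const_mul _) hs (fun t ht => ?_)
    rw [hdeq t ht]
    exact mul_le_mul_of_nonneg_right
      (Real.exp_le_exp.2 (by nlinarith [(hx t ht).1])) (hv0 t ht).le
  -- lower bound: exp(α - β xhi) * V ≤ D
  have hlb : Real.exp (α - β * xhi) * V ≤ D := by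
    rw [hD, hV, ← integral_const_mul]
    refine setIntegral_mono_on (hv.const_mul _) hd hs (fun t ht => ?_)
    rw [hdeq t ht]
    exact mul_le_mul_of_nonneg_right
      (Real.exp_le_exp.2 (by nlinarith [(hx t ht).2])) (hv0 t ht).le
  have hVpos : 0 < V := by
    nlinarith [Real.exp_pos (α - β * xlo), Real.exp_pos (α - β * xhi)]
  have hc : 0 < D / V := div_pos hDpos hVpos
  set L := Real.log (D / V) with hL
  -- log bounds
  have hlog_ub : L ≤ α - β * xlo := by
    have : D / V ≤ Real.exp (α - β * xlo) := by
      rw [div_le_iff₀ hVpos]; linarith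
    calc L ≤ Real.log (Real.exp (α - β * xlo)) := Real.log_le_log hc this
    _ = α - β * xlo := Real.log_exp _
  have hlog_lb : α - β * xhi ≤ L := by
    have : Real.exp (α - β * xhi) ≤ D / V := by
      rw [le_div_iff₀ hVpos]; linarith
    calc α - β * xhi = Real.log (Real.exp (α - β * xhi)) := (Real.log_exp _).symm
    _ ≤ L := Real.log_le_log (Real.exp_pos _) this
  have hmem : (α / β - (1 / β) * L) ∈ Set.Icc xlo xhi := by
    constructor
    · have h1 : (1 / β) * L ≤ (1 / β) * (α - β * xlo) :=
        mul_le_mul_of_nonneg_left hlog_ub (by positivity)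
      have h2 : (1 / β) * (α - β * xlo) = α / β - xlo := by field_simp
      linarith
    · have h1 : (1 / β) * (α - β * xhi) ≤ (1 / β) * L :=
        mul_le_mul_of_nonneg_left hlog_lb (by positivity)
      have h2 : (1 / β) * (α - β * xhi) = α / β - xhi := by field_simp
      linarith
  have hexpL : α - β * (α / β - (1 / β) * L) = L := by field_simp; ring
  have heq : D = Real.exp (α - β * (α / β - (1 / β) * L)) * V := by
    rw [hexpL, hL, Real.exp_log hc]
    field_simp
  refine ⟨hmem, heq, ?_⟩
  -- main inequality
  have hdpos : ∀ t ∈ Set.Icc (0 : ℝ) 1, 0 < d t := fun t ht => by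
    rw [hdeq t ht]; exact mul_pos (Real.exp_pos _) (hv0 t ht)
  -- g t = d t * log (d t / v t) equals α * d t - β * (x t * d t)
  have hgint : IntegrableOn (fun t => α * d t - β * (x t * d t)) (Set.Icc 0 1) :=
    (hd.const_mul α).sub (hxd.const_mul β)
  have hfint : IntegrableOn
      (fun t => Real.log (D / V) * d t + (d t - (D / V) * v t)) (Set.Icc 0 1) :=
    (hd.const_mul _).add (hd.sub (hv.const_mul _))
  have hkey : (∫ t in Set.Icc (0 : ℝ) 1,
      (Real.log (D / V) * d t + (d t - (D / V) * v t))) ≤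
      ∫ t in Set.Icc (0 : ℝ) 1, (α * d t - β * (x t * d t)) := by
    refine setIntegral_mono_on hfint hgint hs (fun t ht => ?_)
    have hvt := hv0 t ht
    have hdt : 0 < d t := by rw [hdeq t ht]; exact mul_pos (Real.exp_pos _) hvt
    have hdv : d t / v t = Real.exp (α - β * x t) := by
      rw [hdeq t ht]; field_simp
    have hlg : Real.log (d t / v t) = α - β * x t := by
      rw [hdv, Real.log_exp]
    have := gibbs_pointwise (d t) (v t) (D / V) hdt hvt hc
    rw [hlg] at this
    nlinarith [this]
  have h1 : IntegrableOn (fun t => Real.log (D / V) * d t) (Set.Icc 0 1) :=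
    hd.const_mul _
  have h3 : IntegrableOn (fun t => (D / V) * v t) (Set.Icc 0 1) := hv.const_mul _
  have h2 : IntegrableOn (fun t => d t - (D / V) * v t) (Set.Icc 0 1) := hd.sub h3
  have h4 : IntegrableOn (fun t => α * d t) (Set.Icc 0 1) := hd.const_mul α
  have h5 : IntegrableOn (fun t => β * (x t * d t)) (Set.Icc 0 1) := hxd.const_mul β
  have hint1 : (∫ t in Set.Icc (0 : ℝ) 1,
      (Real.log (D / V) * d t + (d t - (D / V) * v t))) =
      Real.log (D / V) * D + (D - (D / V) * V) := by
    rw [integral_add h1 h2, integral_sub hd h3, integral_const_mul, integral_const_mul,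
        ← hD, ← hV]
  have hint2 : (∫ t in Set.Icc (0 : ℝ) 1, (α * d t - β * (x t * d t))) =
      α * D - β * ∫ t in Set.Icc (0 : ℝ) 1, x t * d t := by
    rw [integral_sub h4 h5, integral_const_mul, integral_const_mul, ← hD]
  rw [hint1, hint2] at hkey
  have hcv : (D / V) * V = D := by field_simp
  rw [hcv] at hkey
  -- hkey : L * D + (D - D) ≤ α * D - β * ∫ x d
  have hfinal : β * (∫ t in Set.Icc (0 : ℝ) 1, x t * d t) ≤ α * D - L * D := by
    rw [hL]; linarith
  have hx' : (α / β - (1 / β) * L) * D = (α * D - L * D) / β := by field_simp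
  rw [hx']
  rw [le_div_iff₀ hβ]
  linarith
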